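/- Let A, B be n×n positive definite complex matrices, τ ∈ (0,1) and t ∈ (0,1). If t ≤ min{τ, 1-τ} or t ≥ max{τ, 1-τ}, then !_t(A,B) + (t(1-t)/(τ(1-τ)))·(A ∇ B - !_τ(A,B)) ≤ A ∇ B in the Loewner order. If instead min{τ, 1-τ} ≤ t ≤ max{τ, 1-τ}, the reverse Loewner inequality holds. -/

import Mathlib

open Matrix ComplexOrder

/-- The weighted matrix harmonic mean `A !_t B = ((1-t)A⁻¹ + tB⁻¹)⁻¹`. -/
noncomputable def mharm {n : ℕ} (t : ℝ) (A B : Matrix (Fin n) (Fin n) ℂ) :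
    Matrix (Fin n) (Fin n) ℂ :=
  (((1 - t : ℝ) : ℂ) • A⁻¹ + ((t : ℝ) : ℂ) • B⁻¹)⁻¹

/-- The harmonic Heinz matrix mean `!_t(A,B) = (A !_t B + A !_{1-t} B)/2`. -/
noncomputable def mheinz {n : ℕ} (t : ℝ) (A B : Matrix (Fin n) (Fin n) ℂ) :
    Matrix (Fin n) (Fin n) ℂ :=
  (2 : ℂ)⁻¹ • (mharm t A B + mharm (1 - t) A B)

/-- The matrix arithmetic mean `A ∇ B = (A + B)/2`. -/
noncomputable def marith {n : ℕ} (A B : Matrix (Fin n) (Fin n) ℂ) :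
    Matrix (Fin n) (Fin n) ℂ :=
  (2 : ℂ)⁻¹ • (A + B)

variable {n : ℕ}

noncomputable def mhI (t : ℝ) (X : Matrix (Fin n) (Fin n) ℂ) : Matrix (Fin n) (Fin n) ℂ :=
  (((1 - t : ℝ) : ℂ) • 1 + ((t : ℝ) : ℂ) • X)⁻¹

noncomputable def meI (t τ : ℝ) (X : Matrix (Fin n) (Fin n) ℂ) : Matrix (Fin n) (Fin n) ℂ :=
  (2 : ℂ)⁻¹ • (1 + X⁻¹) - ((2 : ℂ)⁻¹ • (mhI t X + mhI (1 - t) X)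
    + ((t * (1 - t) / (τ * (1 - τ)) : ℝ) : ℂ) • ((2 : ℂ)⁻¹ • (1 + X⁻¹)
      - (2 : ℂ)⁻¹ • (mhI τ X + mhI (1 - τ) X)))

noncomputable def sh (t x : ℝ) : ℝ := (1 - t + t * x)⁻¹

noncomputable def se (t τ x : ℝ) : ℝ :=
  2⁻¹ * (1 + x⁻¹) - (2⁻¹ * (sh t x + sh (1 - t) x)
    + (t * (1 - t) / (τ * (1 - τ))) * (2⁻¹ * (1 + x⁻¹) - 2⁻¹ * (sh τ x + sh (1 - τ) x)))

lemma diagonal_inv (v : Fin n → ℝ) (hv : ∀ i, v i ≠ 0) :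
    (diagonal (fun i => (v i : ℂ)))⁻¹ = diagonal (fun i => (((v i)⁻¹ : ℝ) : ℂ)) := by
  apply inv_eq_right_inv
  rw [diagonal_mul_diagonal]
  rw [show (fun i => (v i : ℂ) * (((v i)⁻¹ : ℝ) : ℂ)) = fun _ => (1 : ℂ) by
    funext i
    push_cast
    field_simp [hv i]]
  exact diagonal_one

lemma mhI_diagonal (t : ℝ) (d : Fin n → ℝ) (hd : ∀ i, 1 - t + t * d i ≠ 0) :
    mhI t (diagonal (fun i => (d i : ℂ))) = diagonal (fun i => ((sh t (d i) : ℝ) : ℂ)) := by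
  unfold mhI sh
  have h1 : (((1 - t : ℝ) : ℂ) • (1 : Matrix (Fin n) (Fin n) ℂ) + ((t : ℝ) : ℂ) • diagonal (fun i => (d i : ℂ)))
      = diagonal (fun i => ((1 - t + t * d i : ℝ) : ℂ)) := by
    rw [← diagonal_one, ← diagonal_smul, ← diagonal_smul, diagonal_add]
    rw [diagonal_eq_diagonal_iff]
    intro i
    simp only [Pi.smul_apply, smul_eq_mul, Pi.one_apply, mul_one]
    push_cast
    ring
  rw [h1, diagonal_inv _ hd]

lemma meI_diagonal (t τ : ℝ) (d : Fin n → ℝ) (hd : ∀ i, 0 < d i)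
    (ht : t ∈ Set.Ioo (0:ℝ) 1) (hτ : τ ∈ Set.Ioo (0:ℝ) 1) :
    meI t τ (diagonal (fun i => (d i : ℂ))) = diagonal (fun i => ((se t τ (d i) : ℝ) : ℂ)) := by
  obtain ⟨ht0, ht1⟩ := ht
  obtain ⟨hτ0, hτ1⟩ := hτ
  unfold meI
  rw [diagonal_inv _ (fun i => (hd i).ne'),
    mhI_diagonal t d (fun i => by nlinarith [hd i]),
    mhI_diagonal (1-t) d (fun i => by nlinarith [hd i]),
    mhI_diagonal τ d (fun i => by nlinarith [hd i]),
    mhI_diagonal (1-τ) d (fun i => by nlinarith [hd i]),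
    ← diagonal_one]
  simp only [diagonal_add, ← diagonal_smul, diagonal_sub]
  rw [diagonal_eq_diagonal_iff]
  intro i
  unfold se
  push_cast
  simp only [Pi.smul_apply, smul_eq_mul]

lemma uconj_inv (U M : Matrix (Fin n) (Fin n) ℂ) (hU : U * Uᴴ = 1) (hU' : Uᴴ * U = 1) :
    (U * M * Uᴴ)⁻¹ = U * M⁻¹ * Uᴴ := by
  rw [Matrix.mul_inv_rev, Matrix.mul_inv_rev, Matrix.inv_eq_left_inv hU,
    Matrix.inv_eq_left_inv hU', mul_assoc]

lemma conj_mhI (t : ℝ) (U D : Matrix (Fin n) (Fin n) ℂ) (hU : U * Uᴴ = 1) (hU' : Uᴴ * U = 1) :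
    mhI t (U * D * Uᴴ) = U * mhI t D * Uᴴ := by
  unfold mhI
  rw [← uconj_inv U _ hU hU']
  congr 1
  simp only [Matrix.mul_add, Matrix.add_mul, Matrix.mul_smul, Matrix.smul_mul, Matrix.mul_one, hU]

lemma conj_meI (t τ : ℝ) (U D : Matrix (Fin n) (Fin n) ℂ) (hU : U * Uᴴ = 1) (hU' : Uᴴ * U = 1) :
    meI t τ (U * D * Uᴴ) = U * meI t τ D * Uᴴ := by
  unfold meI
  rw [uconj_inv U _ hU hU', conj_mhI t U D hU hU', conj_mhI (1-t) U D hU hU',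
    conj_mhI τ U D hU hU', conj_mhI (1-τ) U D hU hU']
  simp only [Matrix.mul_add, Matrix.add_mul, Matrix.mul_sub, Matrix.sub_mul, Matrix.mul_smul,
    Matrix.smul_mul, Matrix.mul_one, hU]

set_option maxHeartbeats 2000000 in
lemma se_eq {t τ x : ℝ} (ht0 : 0 < t) (ht1 : t < 1) (hτ0 : 0 < τ) (hτ1 : τ < 1)
    (hx : 0 < x) :
    se t τ x = t * (1 - t) * ((t - τ) * (t + τ - 1)) * (x - 1) ^ 4 * (x + 1) /
      (2 * x * (1 - t + t * x) * (t + (1 - t) * x) * (1 - τ + τ * x) * (τ + (1 - τ) * x)) := by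
  have h1 : (1 - t + t * x) ≠ 0 := by nlinarith
  have h2 : (1 - (1 - t) + (1 - t) * x) ≠ 0 := by nlinarith
  have h3 : (1 - τ + τ * x) ≠ 0 := by nlinarith
  have h4 : (1 - (1 - τ) + (1 - τ) * x) ≠ 0 := by nlinarith
  have h2' : (t + (1 - t) * x) ≠ 0 := by nlinarith
  have h4' : (τ + (1 - τ) * x) ≠ 0 := by nlinarith
  have hττ : τ * (1 - τ) ≠ 0 := by nlinarith
  unfold se sh
  rw [eq_div_iff (by positivity)]
  have hτ' : τ ≠ 0 := hτ0.ne'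
  have hτ'' : 1 - τ ≠ 0 := by linarith
  have c1 : 1 - t + x * t ≠ 0 := by nlinarith
  have c2 : 1 - (1 - t) + x * (1 - t) ≠ 0 := by nlinarith
  have c3 : 1 - τ + x * τ ≠ 0 := by nlinarith
  have c4 : 1 - (1 - τ) + x * (1 - τ) ≠ 0 := by nlinarith
  field_simp [h1, h2, h3, h4, h2', h4', hττ, hx.ne']
  ring

lemma se_nonneg {t τ x : ℝ} (ht0 : 0 < t) (ht1 : t < 1) (hτ0 : 0 < τ) (hτ1 : τ < 1)
    (hx : 0 < x) (h : 0 ≤ (t - τ) * (t + τ - 1)) : 0 ≤ se t τ x := by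
  rw [se_eq ht0 ht1 hτ0 hτ1 hx]
  apply div_nonneg
  · exact mul_nonneg (mul_nonneg (mul_nonneg (by nlinarith) h) (by positivity)) (by linarith)
  · exact le_of_lt (mul_pos (mul_pos (mul_pos (mul_pos (mul_pos two_pos hx)
      (by nlinarith)) (by nlinarith)) (by nlinarith)) (by nlinarith))

lemma se_nonpos {t τ x : ℝ} (ht0 : 0 < t) (ht1 : t < 1) (hτ0 : 0 < τ) (hτ1 : τ < 1)
    (hx : 0 < x) (h : (t - τ) * (t + τ - 1) ≤ 0) : se t τ x ≤ 0 := by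
  rw [se_eq ht0 ht1 hτ0 hτ1 hx]
  apply div_nonpos_of_nonpos_of_nonneg
  · have h1 : 0 ≤ t * (1 - t) := by nlinarith
    have h2 : (0:ℝ) ≤ (x - 1) ^ 4 := by positivity
    nlinarith [mul_nonneg (mul_nonneg h1 (neg_nonneg.mpr h)) h2]
  · exact le_of_lt (mul_pos (mul_pos (mul_pos (mul_pos (mul_pos two_pos hx)
      (by nlinarith)) (by nlinarith)) (by nlinarith)) (by nlinarith))

open scoped MatrixOrder in
lemma key {A B : Matrix (Fin n) (Fin n) ℂ} (hA : A.PosDef) (hB : B.PosDef) (τ t : ℝ)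
    (hτ : τ ∈ Set.Ioo (0 : ℝ) 1) (ht : t ∈ Set.Ioo (0 : ℝ) 1) :
    ∃ (C : Matrix (Fin n) (Fin n) ℂ) (d : Fin n → ℝ), (∀ i, 0 < d i) ∧
      marith A B - (mheinz t A B +
        ((t * (1 - t) / (τ * (1 - τ)) : ℝ) : ℂ) • (marith A B - mheinz τ A B))
      = C * diagonal (fun i => ((se t τ (d i) : ℝ) : ℂ)) * Cᴴ := by
  classical
  set S := CFC.sqrt A with hSdef
  have hS : S * S = A := CFC.sqrt_mul_sqrt_self A hA.posSemidef.nonneg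
  have hSH : Sᴴ = S := (CFC.sqrt_nonneg A).posSemidef.1
  have hAdet : IsUnit A.det := isUnit_iff_ne_zero.mpr hA.det_pos.ne'
  have hBdet : IsUnit B.det := isUnit_iff_ne_zero.mpr hB.det_pos.ne'
  have hSdet : IsUnit S.det := by
    rw [isUnit_iff_ne_zero]
    intro h0
    apply hA.det_pos.ne'
    rw [← hS, det_mul, h0, mul_zero]
  have hSunit : IsUnit S := (Matrix.isUnit_iff_isUnit_det S).mpr hSdet
  set X := S * B⁻¹ * S with hXdef
  -- X is positive definite
  have hXH : X.IsHermitian := by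
    show Xᴴ = X
    rw [hXdef, conjTranspose_mul, conjTranspose_mul, hSH, hB.inv.1.eq, mul_assoc]
  have hX : X.PosDef := by
    refine .of_dotProduct_mulVec_pos hXH fun x hx => ?_
    have hy : S *ᵥ x ≠ 0 := by
      intro h0
      exact hx ((Matrix.mulVec_injective_iff_isUnit.mpr hSunit)
        (by simpa using h0 : S *ᵥ x = S *ᵥ 0))
    have : star x ⬝ᵥ X *ᵥ x = star (S *ᵥ x) ⬝ᵥ B⁻¹ *ᵥ (S *ᵥ x) := by
      rw [hXdef, ← Matrix.mulVec_mulVec, ← Matrix.mulVec_mulVec,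
        Matrix.dotProduct_mulVec (star x) S, Matrix.star_mulVec, hSH]
    rw [this]
    exact hB.inv.dotProduct_mulVec_pos hy
  -- express everything through X
  have hBX : B = S * X⁻¹ * S := by
    rw [hXdef, Matrix.mul_inv_rev, Matrix.mul_inv_rev,
      Matrix.nonsing_inv_nonsing_inv B hBdet]
    calc B = (S * S⁻¹) * B * (S⁻¹ * S) := by
          rw [Matrix.mul_nonsing_inv S hSdet, Matrix.nonsing_inv_mul S hSdet, mul_one, one_mul]
      _ = S * (S⁻¹ * (B * S⁻¹)) * S := by simp only [mul_assoc]
  have hAX : A = S * 1 * S := by rw [mul_one, hS]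
  have hBinvX : B⁻¹ = S⁻¹ * X * S⁻¹ := by
    rw [hXdef]
    calc B⁻¹ = (S⁻¹ * S) * B⁻¹ * (S * S⁻¹) := by
          rw [Matrix.mul_nonsing_inv S hSdet, Matrix.nonsing_inv_mul S hSdet, mul_one, one_mul]
      _ = S⁻¹ * (S * B⁻¹ * S) * S⁻¹ := by simp only [mul_assoc]
  have hAinvX : A⁻¹ = S⁻¹ * 1 * S⁻¹ := by
    rw [mul_one, ← hS, Matrix.mul_inv_rev]
  -- mharm through X
  have hmharm : ∀ s : ℝ, mharm s A B = S * mhI s X * S := by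
    intro s
    unfold mharm mhI
    have h1 : ((1 - s : ℝ) : ℂ) • A⁻¹ + ((s : ℝ) : ℂ) • B⁻¹
        = S⁻¹ * (((1 - s : ℝ) : ℂ) • 1 + ((s : ℝ) : ℂ) • X) * S⁻¹ := by
      rw [hAinvX, hBinvX]
      simp only [Matrix.mul_add, Matrix.add_mul, Matrix.mul_smul, Matrix.smul_mul]
    rw [h1, Matrix.mul_inv_rev, Matrix.mul_inv_rev,
      Matrix.nonsing_inv_nonsing_inv S hSdet, mul_assoc]
  have hmar : marith A B = S * ((2 : ℂ)⁻¹ • (1 + X⁻¹)) * S := by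
    unfold marith
    rw [hAX, hBX]
    simp only [Matrix.mul_add, Matrix.add_mul, Matrix.smul_mul, Matrix.mul_smul]
  have hkey : marith A B - (mheinz t A B +
      ((t * (1 - t) / (τ * (1 - τ)) : ℝ) : ℂ) • (marith A B - mheinz τ A B))
      = S * meI t τ X * S := by
    unfold mheinz meI
    rw [hmar, hmharm t, hmharm (1-t), hmharm τ, hmharm (1-τ)]
    simp only [Matrix.mul_add, Matrix.add_mul, Matrix.mul_sub, Matrix.sub_mul,
      Matrix.mul_smul, Matrix.smul_mul, smul_add, smul_sub]
  -- spectral theorem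
  have hspec := hX.1.spectral_theorem
  set U : Matrix (Fin n) (Fin n) ℂ :=
    (Matrix.IsHermitian.eigenvectorUnitary hX.1 : Matrix (Fin n) (Fin n) ℂ) with hUdef
  have hU : U * Uᴴ = 1 := by
    rw [← star_eq_conjTranspose]
    exact Matrix.mem_unitaryGroup_iff.mp (Matrix.IsHermitian.eigenvectorUnitary hX.1).2
  have hU' : Uᴴ * U = 1 := by
    rw [← star_eq_conjTranspose]
    exact Matrix.mem_unitaryGroup_iff'.mp (Matrix.IsHermitian.eigenvectorUnitary hX.1).2
  have hXU : X = U * diagonal (fun i => ((hX.1.eigenvalues i : ℝ) : ℂ)) * Uᴴ := by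
    rw [← star_eq_conjTranspose]
    exact hspec
  have hmeIX : meI t τ X = U * diagonal (fun i => ((se t τ (hX.1.eigenvalues i) : ℝ) : ℂ)) * Uᴴ := by
    conv_lhs => rw [hXU]
    rw [conj_meI t τ U _ hU hU',
      meI_diagonal t τ _ (fun i => hX.eigenvalues_pos i) ht hτ]
  refine ⟨S * U, hX.1.eigenvalues, fun i => hX.eigenvalues_pos i, ?_⟩
  rw [hkey, hmeIX, conjTranspose_mul, hSH]
  simp only [mul_assoc]

theorem stmt_17 {n : ℕ} (A B : Matrix (Fin n) (Fin n) ℂ)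
    (hA : A.PosDef) (hB : B.PosDef) (τ t : ℝ)
    (hτ : τ ∈ Set.Ioo (0 : ℝ) 1) (ht : t ∈ Set.Ioo (0 : ℝ) 1) :
    ((t ≤ min τ (1 - τ) ∨ t ≥ max τ (1 - τ)) →
      (marith A B -
        (mheinz t A B +
          ((t * (1 - t) / (τ * (1 - τ)) : ℝ) : ℂ) • (marith A B - mheinz τ A B))).PosSemidef) ∧
    ((min τ (1 - τ) ≤ t ∧ t ≤ max τ (1 - τ)) →
      ((mheinz t A B +
          ((t * (1 - t) / (τ * (1 - τ)) : ℝ) : ℂ) • (marith A B - mheinz τ A B)) -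
        marith A B).PosSemidef) := by
  obtain ⟨C, d, hd, hrepr⟩ := key hA hB τ t hτ ht
  obtain ⟨ht0, ht1⟩ := ht
  obtain ⟨hτ0, hτ1⟩ := hτ
  constructor
  · intro h
    rw [hrepr]
    refine (posSemidef_diagonal_iff.mpr fun i => ?_).mul_mul_conjTranspose_same C
    refine Complex.zero_le_real.mpr (se_nonneg ht0 ht1 hτ0 hτ1 (hd i) ?_)
    rcases h with h | h
    · rw [le_min_iff] at h
      nlinarith [mul_nonneg (sub_nonneg.mpr h.1) (sub_nonneg.mpr h.2)]
    · rw [ge_iff_le, max_le_iff] at h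
      nlinarith [mul_nonneg (sub_nonneg.mpr h.1) (sub_nonneg.mpr h.2)]
  · intro h
    have h2 : (mheinz t A B +
        ((t * (1 - t) / (τ * (1 - τ)) : ℝ) : ℂ) • (marith A B - mheinz τ A B)) - marith A B
        = C * diagonal (fun i => (((-se t τ (d i) : ℝ)) : ℂ)) * Cᴴ := by
      rw [← neg_sub (marith A B), hrepr]
      simp only [Matrix.neg_mul, Matrix.mul_neg, ← diagonal_neg, Complex.ofReal_neg]
    rw [h2]
    refine (posSemidef_diagonal_iff.mpr fun i => ?_).mul_mul_conjTranspose_same C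
    refine Complex.zero_le_real.mpr ?_
    rw [neg_nonneg]
    refine se_nonpos ht0 ht1 hτ0 hτ1 (hd i) ?_
    obtain ⟨h1, h2⟩ := h
    rcases le_total τ (1 - τ) with hc | hc
    · rw [min_eq_left hc] at h1
      rw [max_eq_right hc] at h2
      nlinarith [mul_nonneg (sub_nonneg.mpr h1) (sub_nonneg.mpr h2)]
    · rw [min_eq_right hc] at h1
      rw [max_eq_left hc] at h2
      nlinarith [mul_nonneg (sub_nonneg.mpr h1) (sub_nonneg.mpr h2)]
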